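/- Let α > 0, let n be an integer with |n| ≥ 1, let κ ∈ ℝ and R > 0. If u ∈ X satisfies γ_κ(u) = 0, then I_κ(u) = α⁻² ∫₀^R r ( ln(1 + α u(r)²) − α u(r)²/(1 + α u(r)²) ) dr; if moreover u is not identically zero, then I_κ(u) > 0. -/

import Mathlib

open MeasureTheory Set Filter

noncomputable section

/-- The Bessel function `J₀`. -/
def besselJ0 (x : ℝ) : ℝ :=
  ∑' m : ℕ, (-1 : ℝ) ^ m * (x / 2) ^ (2 * m) / ((Nat.factorial m : ℝ)) ^ 2

/-- The smallest positive zero of `J₀` (≈ 2.404826). -/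
def besselR0 : ℝ := sInf {x : ℝ | 0 < x ∧ besselJ0 x = 0}

/-- `u` is a classical solution of the `n`-vortex equation with parameters `(α, n, κ, R)`. -/
def IsVortexSol (α : ℝ) (n : ℤ) (κ R : ℝ) (u : ℝ → ℝ) : Prop :=
  ContinuousOn u (Icc 0 R) ∧
  (∀ r ∈ Ioo (0 : ℝ) R, DifferentiableAt ℝ u r ∧ DifferentiableAt ℝ (deriv u) r) ∧
  u 0 = 0 ∧ u R = 0 ∧
  ∀ r ∈ Ioo (0 : ℝ) R,
    deriv (fun s => s * deriv u s) r - ((n : ℝ) ^ 2 / r) * u r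
      + 2 * r * (u r) ^ 3 / (1 + α * (u r) ^ 2) - 2 * κ * r * u r = 0

/-- `u` has finite energy. -/
def FiniteEnergy (α R : ℝ) (u : ℝ → ℝ) : Prop :=
  IntegrableOn
    (fun r => r * (deriv u r) ^ 2 + (u r) ^ 2 / r + r * Real.log (1 + α * (u r) ^ 2))
    (Ioo 0 R)

/-- The energy flux `Q(u) = 2π ∫₀^R r u(r)² dr`. -/
def fluxQ (R : ℝ) (u : ℝ → ℝ) : ℝ := 2 * Real.pi * ∫ r in Ioo (0 : ℝ) R, r * (u r) ^ 2

/-- The tent function with parameters `a` and `b`. -/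
def tent (a b : ℝ) : ℝ → ℝ := fun r => if r ≤ a then (b / a) * r else (b / a) * (2 * a - r)

/-- The action functional `I_κ`. -/
def actI (α : ℝ) (n : ℤ) (κ R : ℝ) (u : ℝ → ℝ) : ℝ :=
  (1 / 2) * ∫ r in Ioo (0 : ℝ) R,
    (r * (deriv u r) ^ 2 + ((n : ℝ) ^ 2 / r) * (u r) ^ 2
      - 2 * (α⁻¹ - κ) * r * (u r) ^ 2 + 2 * (α ^ 2)⁻¹ * r * Real.log (1 + α * (u r) ^ 2))

/-- The action functional `𝓘`. -/
def actI0 (α : ℝ) (n : ℤ) (R : ℝ) (u : ℝ → ℝ) : ℝ :=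
  (1 / 2) * ∫ r in Ioo (0 : ℝ) R,
    (r * (deriv u r) ^ 2 + ((n : ℝ) ^ 2 / r) * (u r) ^ 2
      - 2 * α⁻¹ * r * (u r) ^ 2 + 2 * (α ^ 2)⁻¹ * r * Real.log (1 + α * (u r) ^ 2))

/-- The functional `γ_κ`. -/
def gammaK (α : ℝ) (n : ℤ) (κ R : ℝ) (u : ℝ → ℝ) : ℝ :=
  (1 / 2) * ∫ r in Ioo (0 : ℝ) R,
    (r * (deriv u r) ^ 2 + ((n : ℝ) ^ 2 / r) * (u r) ^ 2
      - 2 * (α⁻¹ - κ) * r * (u r) ^ 2 + 2 * α⁻¹ * r * (u r) ^ 2 / (1 + α * (u r) ^ 2))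

/-- Membership in the class `X`. -/
def MemX (R : ℝ) (u : ℝ → ℝ) : Prop :=
  ContinuousOn u (Icc 0 R) ∧ ContDiffOn ℝ 1 u (Ioo 0 R) ∧ u 0 = 0 ∧ u R = 0 ∧
    IntegrableOn (fun r => r * (deriv u r) ^ 2 + (u r) ^ 2 / r) (Ioo 0 R)

/-- Membership in the class `X`, allowing finitely many exceptional points. -/
def MemX' (R : ℝ) (u : ℝ → ℝ) : Prop :=
  ContinuousOn u (Icc 0 R) ∧ (∃ S : Finset ℝ, ContDiffOn ℝ 1 u (Ioo 0 R \ ↑S)) ∧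
    u 0 = 0 ∧ u R = 0 ∧
    IntegrableOn (fun r => r * (deriv u r) ^ 2 + (u r) ^ 2 / r) (Ioo 0 R)

/-- The admissible class `𝒜`. -/
def Admissible (α R : ℝ) (v : ℝ → ℝ) : Prop :=
  (∃ K : NNReal, LipschitzOnWith K v (Icc 0 R)) ∧ v 0 = 0 ∧ v R = 0 ∧ FiniteEnergy α R v

end


private lemma aux_log_ge {t : ℝ} (ht : 0 ≤ t) : t / (1 + t) ≤ Real.log (1 + t) := by
  have h1 : (0:ℝ) < 1 + t := by linarith
  have h2 := Real.log_le_sub_one_of_pos (inv_pos.2 h1)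
  rw [Real.log_inv] at h2
  have h3 : (1 + t)⁻¹ - 1 = -(t / (1 + t)) := by field_simp; ring
  rw [h3] at h2; linarith

private lemma aux_log_gt {t : ℝ} (ht : 0 < t) : t / (1 + t) < Real.log (1 + t) := by
  have h1 : (0:ℝ) < 1 + t := by linarith
  have hne : (1 + t)⁻¹ ≠ 1 := by
    intro h; rw [inv_eq_one] at h; linarith
  have h2 := Real.log_lt_sub_one_of_pos (inv_pos.2 h1) hne
  rw [Real.log_inv] at h2
  have h3 : (1 + t)⁻¹ - 1 = -(t / (1 + t)) := by field_simp; ring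
  rw [h3] at h2; linarith

private lemma integrableOn_of_bdd {R : ℝ} {f : ℝ → ℝ} (hf : ContinuousOn f (Set.Ioo 0 R))
    {C : ℝ} (hC : ∀ r ∈ Set.Ioo (0:ℝ) R, |f r| ≤ C) :
    MeasureTheory.IntegrableOn f (Set.Ioo 0 R) := by
  have hconst : MeasureTheory.IntegrableOn (fun _ : ℝ => C) (Set.Ioo 0 R) :=
    MeasureTheory.integrableOn_const measure_Ioo_lt_top.ne
  refine hconst.mono' (hf.aestronglyMeasurable measurableSet_Ioo) ?_
  exact (MeasureTheory.ae_restrict_iff' measurableSet_Ioo).2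
    (Filter.Eventually.of_forall fun r hr => by simpa [Real.norm_eq_abs] using hC r hr)

/-- the action `I_κ` on the Nehari set. -/
theorem stmt16 (α : ℝ) (hα : 0 < α) (n : ℤ) (hn : 1 ≤ |n|) (κ R : ℝ) (hR : 0 < R)
    (u : ℝ → ℝ) (hu : MemX R u) (hγ : gammaK α n κ R u = 0) :
    (actI α n κ R u
      = (α ^ 2)⁻¹ * ∫ r in Ioo (0 : ℝ) R,
          r * (Real.log (1 + α * (u r) ^ 2) - α * (u r) ^ 2 / (1 + α * (u r) ^ 2))) ∧
    ((∃ r ∈ Icc (0 : ℝ) R, u r ≠ 0) → 0 < actI α n κ R u) := by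
  obtain ⟨hcont, hcd, h0, hRz, hint⟩ := hu
  have hα0 : α ≠ 0 := ne_of_gt hα
  have hcIoo : ContinuousOn u (Ioo 0 R) := hcont.mono Ioo_subset_Icc_self
  obtain ⟨C, hC⟩ := isCompact_Icc.exists_bound_of_continuousOn hcont
  have hu2 : ∀ r ∈ Ioo (0:ℝ) R, (u r) ^ 2 ≤ C ^ 2 := by
    intro r hr
    have h1 : |u r| ≤ C := by simpa [Real.norm_eq_abs] using hC r (Ioo_subset_Icc_self hr)
    calc (u r) ^ 2 = |u r| ^ 2 := (sq_abs _).symm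
    _ ≤ C ^ 2 := pow_le_pow_left₀ (abs_nonneg _) h1 2
  have hden : ∀ r : ℝ, (0:ℝ) < 1 + α * (u r) ^ 2 := fun r => by positivity
  -- integrable pieces
  have hq : IntegrableOn (fun r => r * (u r) ^ 2) (Ioo 0 R) := by
    refine integrableOn_of_bdd (C := R * C ^ 2) ?_ ?_
    · exact continuousOn_id.mul (hcIoo.pow 2)
    intro r hr
    rw [abs_of_nonneg (by nlinarith [sq_nonneg (u r), hr.1.le] : (0:ℝ) ≤ r * (u r) ^ 2)]
    exact mul_le_mul hr.2.le (hu2 r hr) (sq_nonneg _) hR.le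
  have hp2 : IntegrableOn (fun r => r * (u r) ^ 2 / (1 + α * (u r) ^ 2)) (Ioo 0 R) := by
    refine integrableOn_of_bdd (C := R * C ^ 2) ?_ ?_
    · exact (continuousOn_id.mul (hcIoo.pow 2)).div
        (continuousOn_const.add (continuousOn_const.mul (hcIoo.pow 2)))
        (fun r _ => (hden r).ne')
    intro r hr
    have h1 : (0:ℝ) ≤ r * (u r) ^ 2 := by nlinarith [sq_nonneg (u r), hr.1.le]
    rw [abs_of_nonneg (div_nonneg h1 (hden r).le)]
    calc r * (u r) ^ 2 / (1 + α * (u r) ^ 2) ≤ r * (u r) ^ 2 :=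
          div_le_self h1 (by nlinarith [sq_nonneg (u r)])
    _ ≤ R * C ^ 2 := mul_le_mul hr.2.le (hu2 r hr) (sq_nonneg _) hR.le
  have hp3 : IntegrableOn (fun r => r * Real.log (1 + α * (u r) ^ 2)) (Ioo 0 R) := by
    refine integrableOn_of_bdd (C := R * Real.log (1 + α * C ^ 2)) ?_ ?_
    · exact continuousOn_id.mul ((continuousOn_const.add
        (continuousOn_const.mul (hcIoo.pow 2))).log (fun r _ => (hden r).ne'))
    intro r hr
    have hlog1 : 0 ≤ Real.log (1 + α * (u r) ^ 2) :=
      Real.log_nonneg (by nlinarith [sq_nonneg (u r)])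
    have hlog2 : Real.log (1 + α * (u r) ^ 2) ≤ Real.log (1 + α * C ^ 2) :=
      Real.log_le_log (hden r) (by nlinarith [hu2 r hr])
    rw [abs_of_nonneg (mul_nonneg hr.1.le hlog1)]
    exact mul_le_mul hr.2.le hlog2 hlog1 hR.le
  set f : ℝ → ℝ := fun r =>
    r * (Real.log (1 + α * (u r) ^ 2) - α * (u r) ^ 2 / (1 + α * (u r) ^ 2)) with hf_def
  have hf_int : IntegrableOn f (Ioo 0 R) := by
    have h := hp3.sub (hp2.const_mul α)
    refine MeasureTheory.IntegrableOn.congr_fun h (fun r hr => ?_) measurableSet_Ioo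
    simp only [hf_def, Pi.sub_apply]; ring
  have hu2r : IntegrableOn (fun r => (u r) ^ 2 / r) (Ioo 0 R) := by
    refine hint.mono' (((hcIoo.pow 2).div continuousOn_id
      (fun r hr => ne_of_gt hr.1)).aestronglyMeasurable measurableSet_Ioo) ?_
    refine (ae_restrict_iff' measurableSet_Ioo).2 (Eventually.of_forall fun r hr => ?_)
    have h1 : 0 ≤ (u r) ^ 2 / r := div_nonneg (sq_nonneg _) hr.1.le
    have h2 : 0 ≤ r * (deriv u r) ^ 2 := mul_nonneg hr.1.le (sq_nonneg _)
    rw [Real.norm_eq_abs, abs_of_nonneg h1]; linarith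
  set g : ℝ → ℝ := fun r =>
    r * (deriv u r) ^ 2 + ((n : ℝ) ^ 2 / r) * (u r) ^ 2
      - 2 * (α⁻¹ - κ) * r * (u r) ^ 2 + 2 * α⁻¹ * r * (u r) ^ 2 / (1 + α * (u r) ^ 2)
    with hg_def
  have hg_int : IntegrableOn g (Ioo 0 R) := by
    have h := ((hint.add (hu2r.const_mul ((n:ℝ) ^ 2 - 1))).add
      (hq.const_mul (-(2 * (α⁻¹ - κ))))).add (hp2.const_mul (2 * α⁻¹))
    refine MeasureTheory.IntegrableOn.congr_fun h (fun r hr => ?_) measurableSet_Ioo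
    simp only [hg_def, Pi.add_apply]; ring
  have hγ' : (1 / 2 : ℝ) * (∫ r in Ioo (0:ℝ) R, g r) = 0 := hγ
  have hIg : (∫ r in Ioo (0:ℝ) R, g r) = 0 := by linarith
  have heq : EqOn (fun r => r * (deriv u r) ^ 2 + ((n : ℝ) ^ 2 / r) * (u r) ^ 2
      - 2 * (α⁻¹ - κ) * r * (u r) ^ 2 + 2 * (α ^ 2)⁻¹ * r * Real.log (1 + α * (u r) ^ 2))
      (fun r => g r + 2 * (α ^ 2)⁻¹ * f r) (Ioo 0 R) := by
    intro r hr
    simp only [hg_def, hf_def]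
    have hd := (hden r).ne'
    have hr0 := hr.1.ne'
    field_simp
    ring
  have hsplit : actI α n κ R u = (α ^ 2)⁻¹ * ∫ r in Ioo (0:ℝ) R, f r := by
    unfold actI
    rw [setIntegral_congr_fun measurableSet_Ioo heq,
      integral_add hg_int (hf_int.const_mul _), integral_const_mul, hIg]
    ring
  refine ⟨hsplit, fun hne => ?_⟩
  rw [hsplit]
  refine mul_pos (inv_pos.2 (by positivity)) ?_
  have hf_nonneg : 0 ≤ᵐ[volume.restrict (Ioo (0:ℝ) R)] f := by
    refine (ae_restrict_iff' measurableSet_Ioo).2 (Eventually.of_forall fun r hr => ?_)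
    have ht : 0 ≤ α * (u r) ^ 2 := by positivity
    have h := aux_log_ge ht
    exact mul_nonneg hr.1.le (by linarith)
  rw [setIntegral_pos_iff_support_of_nonneg_ae hf_nonneg hf_int]
  obtain ⟨r₁, hr₁, hur₁⟩ := hne
  have hr₁Ioo : r₁ ∈ Ioo (0:ℝ) R := by
    constructor
    · exact lt_of_le_of_ne hr₁.1 (Ne.symm (fun h => hur₁ (by rw [h]; exact h0)))
    · exact lt_of_le_of_ne hr₁.2 (fun h => hur₁ (by rw [h]; exact hRz))
  have hcAt : ContinuousAt u r₁ := hcont.continuousAt (Icc_mem_nhds hr₁Ioo.1 hr₁Ioo.2)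
  have h1 : {x | u x ≠ 0} ∈ nhds r₁ := hcAt.eventually_ne hur₁
  have h2 : (Ioo (0:ℝ) R) ∈ nhds r₁ := isOpen_Ioo.mem_nhds hr₁Ioo
  obtain ⟨ε, hε, hball⟩ := Metric.mem_nhds_iff.1 (inter_mem h1 h2)
  have hsub : Metric.ball r₁ ε ⊆ Function.support f ∩ Ioo 0 R := by
    intro x hx
    obtain ⟨hux, hxI⟩ := hball hx
    refine ⟨ne_of_gt ?_, hxI⟩
    have hu2pos : 0 < (u x) ^ 2 :=
      lt_of_le_of_ne (sq_nonneg _) (Ne.symm (pow_ne_zero 2 hux))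
    have ht : 0 < α * (u x) ^ 2 := mul_pos hα hu2pos
    have hlt := aux_log_gt ht
    exact mul_pos hxI.1 (by linarith)
  refine lt_of_lt_of_le ?_ (measure_mono hsub)
  rw [Real.volume_ball]
  exact ENNReal.ofReal_pos.2 (by linarith)
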